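/- Let D ≥ 5 be an integer and let P be a real polynomial in two variables of total degree D. Suppose p = (c,d) and q = (e,f) are distinct points of ℝ² such that all partial derivatives of P of order strictly less than D−2 (including P itself) vanish at both p and q, i.e. p and q are singular points of the curve P = 0 of multiplicity at least D−2. Then the linear polynomial L(u,v) = (d−f)(u−e) − (c−e)(v−f), whose zero set is the line through p and q, satisfies L^{D−4} divides P; equivalently P = L^{D−4}·Q for some polynomial Q of total degree at most 4. -/

import Mathlib

open MvPolynomial

/-- Evaluation of a bivariate polynomial at a point of the plane. -/
noncomputable def pev (F : MvPolynomial (Fin 2) ℝ) (w : ℝ × ℝ) : ℝ :=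
  eval ![w.1, w.2] F

/-- First directional quantity `F⁽¹⁾ = (c−u)Fᵤ + (d−v)Fᵥ` at `w = (u,v)`, direction point `p = (c,d)`. -/
noncomputable def d1 (F : MvPolynomial (Fin 2) ℝ) (p w : ℝ × ℝ) : ℝ :=
  (p.1 - w.1) * pev (pderiv (0 : Fin 2) F) w + (p.2 - w.2) * pev (pderiv (1 : Fin 2) F) w

/-- Second directional quantity `F⁽²⁾` at `w = (u,v)`, direction point `p = (c,d)`. -/
noncomputable def d2 (F : MvPolynomial (Fin 2) ℝ) (p w : ℝ × ℝ) : ℝ :=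
  (p.1 - w.1) ^ 2 * pev (pderiv (0 : Fin 2) (pderiv (0 : Fin 2) F)) w
    + 2 * (p.1 - w.1) * (p.2 - w.2) * pev (pderiv (1 : Fin 2) (pderiv (0 : Fin 2) F)) w
    + (p.2 - w.2) ^ 2 * pev (pderiv (1 : Fin 2) (pderiv (1 : Fin 2) F)) w

/-- `G₁ = F_a·F_b⁽¹⁾ − F_a⁽¹⁾·F_b`. -/
noncomputable def G1 (Fa Fb : MvPolynomial (Fin 2) ℝ) (p w : ℝ × ℝ) : ℝ :=
  pev Fa w * d1 Fb p w - d1 Fa p w * pev Fb w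

/-- `G₂ = F_a·F_b⁽²⁾ − F_a⁽²⁾·F_b`. -/
noncomputable def G2 (Fa Fb : MvPolynomial (Fin 2) ℝ) (p w : ℝ × ℝ) : ℝ :=
  pev Fa w * d2 Fb p w - d2 Fa p w * pev Fb w

/-- The defining denominator `2(2−D)G₁ − G₂` of the generalised Manin involution. -/
noncomputable def den (Fa Fb : MvPolynomial (Fin 2) ℝ) (D : ℕ) (p w : ℝ × ℝ) : ℝ :=
  2 * (2 - (D : ℝ)) * G1 Fa Fb p w - G2 Fa Fb p w

/-- The generalised Manin involution `ι_p(u,v) = (u,v) + z·(p − (u,v))`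
with `z = 2G₁ / (2(2−D)G₁ − G₂)`. -/
noncomputable def manin (Fa Fb : MvPolynomial (Fin 2) ℝ) (D : ℕ) (p w : ℝ × ℝ) : ℝ × ℝ :=
  w + (2 * G1 Fa Fb p w / den Fa Fb D p w) • (p - w)

/-- The partial derivative with respect to the `i`-th variable, as a plain function
(so it can be iterated). -/
noncomputable def pd (i : Fin 2) : MvPolynomial (Fin 2) ℝ → MvPolynomial (Fin 2) ℝ :=
  fun F => pderiv i F

lemma my_pderiv_comm (i j : Fin 2) (F : MvPolynomial (Fin 2) ℝ) :
    pderiv i (pderiv j F) = pderiv j (pderiv i F) := by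
  rcases eq_or_ne i j with rfl | hij
  · rfl
  induction F using MvPolynomial.induction_on' with
  | monomial s a =>
    simp only [pderiv_monomial]
    rw [tsub_right_comm]
    congr 1
    rw [Finsupp.tsub_apply, Finsupp.tsub_apply, Finsupp.single_apply,
      Finsupp.single_apply, if_neg hij, if_neg (Ne.symm hij)]
    simp only [Nat.sub_zero]
    ring
  | add f g hf hg => simp [map_add, hf, hg]

lemma pd_commute (i j : Fin 2) : Function.Commute (pd i) (pd j) := by
  intro F; exact my_pderiv_comm i j F

lemma pd_add (i : Fin 2) (k : ℕ) (F G : MvPolynomial (Fin 2) ℝ) :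
    (pd i)^[k] (F + G) = (pd i)^[k] F + (pd i)^[k] G := by
  induction k generalizing F G with
  | zero => rfl
  | succ n ih => simp only [Function.iterate_succ_apply, pd, map_add, ih]

lemma pd_C_mul (i : Fin 2) (k : ℕ) (a : ℝ) (F : MvPolynomial (Fin 2) ℝ) :
    (pd i)^[k] (C a * F) = C a * (pd i)^[k] F := by
  induction k generalizing F with
  | zero => rfl
  | succ n ih => simp only [Function.iterate_succ_apply, pd, pderiv_C_mul, ih]

/-- Vanishing to order `m` at `w`. -/
def V (m : ℕ) (F : MvPolynomial (Fin 2) ℝ) (w : ℝ × ℝ) : Prop :=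
  ∀ i j : ℕ, i + j < m → pev ((pd 0)^[i] ((pd 1)^[j] F)) w = 0

lemma V_pd1 {m : ℕ} {F : MvPolynomial (Fin 2) ℝ} {w : ℝ × ℝ} (h : V m F w) :
    V (m - 1) (pd 1 F) w := by
  intro i j hij
  rw [← Function.iterate_succ_apply (pd 1)]
  exact h i (j + 1) (by omega)

lemma V_pd0 {m : ℕ} {F : MvPolynomial (Fin 2) ℝ} {w : ℝ × ℝ} (h : V m F w) :
    V (m - 1) (pd 0 F) w := by
  intro i j hij
  rw [show (pd 1)^[j] (pd 0 F) = pd 0 ((pd 1)^[j] F) from (((pd_commute 0 1).iterate_right j).eq F).symm,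
    ← Function.iterate_succ_apply (pd 0)]
  exact h (i + 1) j (by omega)

lemma V_add {m : ℕ} {F G : MvPolynomial (Fin 2) ℝ} {w : ℝ × ℝ} (hF : V m F w) (hG : V m G w) :
    V m (F + G) w := by
  intro i j hij
  rw [pd_add, pd_add, pev, map_add]
  have := hF i j hij
  have := hG i j hij
  simp only [pev] at *
  rw [this]; simpa

lemma V_C_mul {m : ℕ} {a : ℝ} {F : MvPolynomial (Fin 2) ℝ} {w : ℝ × ℝ} (hF : V m F w) :
    V m (C a * F) w := by
  intro i j hij
  rw [pd_C_mul, pd_C_mul, pev, map_mul, eval_C]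
  have := hF i j hij
  simp only [pev] at this
  rw [this, mul_zero]

/-- Restriction of a bivariate polynomial to the line `t ↦ w + t · dir`. -/
noncomputable def lineRes (w dir : ℝ × ℝ) : MvPolynomial (Fin 2) ℝ →ₐ[ℝ] Polynomial ℝ :=
  aeval ![Polynomial.C w.1 + Polynomial.C dir.1 * Polynomial.X,
          Polynomial.C w.2 + Polynomial.C dir.2 * Polynomial.X]

lemma lineRes_X0 (w dir : ℝ × ℝ) :
    lineRes w dir (X 0) = Polynomial.C w.1 + Polynomial.C dir.1 * Polynomial.X := by
  simp [lineRes]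

lemma lineRes_X1 (w dir : ℝ × ℝ) :
    lineRes w dir (X 1) = Polynomial.C w.2 + Polynomial.C dir.2 * Polynomial.X := by
  simp [lineRes]

lemma derivative_lineRes (w dir : ℝ × ℝ) (F : MvPolynomial (Fin 2) ℝ) :
    Polynomial.derivative (lineRes w dir F)
      = lineRes w dir (C dir.1 * pderiv 0 F + C dir.2 * pderiv 1 F) := by
  induction F using MvPolynomial.induction_on with
  | C a => simp [lineRes]
  | add f g hf hg =>
      simp only [map_add, hf, hg, pderiv_C_mul, mul_add]
      ring
  | mul_X f i hf =>
      fin_cases i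
      · simp only [map_mul, Polynomial.derivative_mul, hf, lineRes_X0,
          pderiv_mul, pderiv_X_self, pderiv_X_of_ne (show (0:Fin 2) ≠ 1 by decide),
          map_add, map_mul, mul_one, mul_zero, add_zero]
        simp [lineRes]
        ring
      · simp only [map_mul, Polynomial.derivative_mul, hf, lineRes_X1,
          pderiv_mul, pderiv_X_self, pderiv_X_of_ne (show (1:Fin 2) ≠ 0 by decide),
          map_add, map_mul, mul_one, mul_zero, add_zero]
        simp [lineRes]
        ring

lemma eval_lineRes (w dir : ℝ × ℝ) (F : MvPolynomial (Fin 2) ℝ) (t : ℝ) :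
    (lineRes w dir F).eval t = eval ![w.1 + t * dir.1, w.2 + t * dir.2] F := by
  induction F using MvPolynomial.induction_on with
  | C a => simp [lineRes]
  | add f g hf hg => simp [map_add, hf, hg]
  | mul_X f i hf =>
      rw [map_mul, Polynomial.eval_mul, hf, map_mul]
      congr 1
      fin_cases i <;> · simp [lineRes]; ring

lemma natDegree_lineRes_le (w dir : ℝ × ℝ) (F : MvPolynomial (Fin 2) ℝ) :
    (lineRes w dir F).natDegree ≤ F.totalDegree := by
  conv_lhs => rw [F.as_sum]
  rw [map_sum]
  apply Polynomial.natDegree_sum_le_of_forall_le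
  intro m hm
  calc ((lineRes w dir) ((monomial m) (coeff m F))).natDegree
      ≤ m.sum fun _ e => e := by
        rw [monomial_eq, map_mul, map_finsuppProd]
        refine (Polynomial.natDegree_mul_le).trans ?_
        rw [show (lineRes w dir) (C (coeff m F)) = Polynomial.C (coeff m F) from by
          simp [lineRes]]
        simp only [Polynomial.natDegree_C, zero_add]
        refine (Polynomial.natDegree_prod_le _ _).trans ?_
        rw [Finsupp.sum]
        apply Finset.sum_le_sum
        intro i _
        simp only [map_pow]
        refine (Polynomial.natDegree_pow_le).trans ?_
        have h1 : ∀ i : Fin 2, ((lineRes w dir) (X i)).natDegree ≤ 1 := by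
          intro i
          have : (lineRes w dir) (X i) = Polynomial.C (![w.1, w.2] i)
              + Polynomial.C (![dir.1, dir.2] i) * Polynomial.X := by
            fin_cases i <;> simp [lineRes]
          rw [this]
          compute_degree
        have h1 := h1 i
        calc m i * ((lineRes w dir) (X i)).natDegree ≤ m i * 1 :=
              Nat.mul_le_mul_left _ h1
          _ = m i := mul_one _
    _ ≤ F.totalDegree := le_totalDegree hm

/-- directional derivative operator -/
noncomputable def Dop (dir : ℝ × ℝ) (F : MvPolynomial (Fin 2) ℝ) : MvPolynomial (Fin 2) ℝ :=
  C dir.1 * pderiv 0 F + C dir.2 * pderiv 1 F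

lemma V_mono {m m' : ℕ} {F : MvPolynomial (Fin 2) ℝ} {w : ℝ × ℝ} (h : V m F w) (hm : m' ≤ m) :
    V m' F w := fun i j hij => h i j (lt_of_lt_of_le hij hm)

lemma V_Dop {m : ℕ} {dir : ℝ × ℝ} {F : MvPolynomial (Fin 2) ℝ} {w : ℝ × ℝ} (h : V m F w) :
    V (m - 1) (Dop dir F) w :=
  V_add (V_C_mul (V_pd0 h)) (V_C_mul (V_pd1 h))

lemma V_Dop_iter {m k : ℕ} {dir : ℝ × ℝ} {F : MvPolynomial (Fin 2) ℝ} {w : ℝ × ℝ}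
    (h : V m F w) : V (m - k) ((Dop dir)^[k] F) w := by
  induction k generalizing F m with
  | zero => simpa using h
  | succ n ih =>
      rw [Function.iterate_succ_apply]
      have := ih (V_Dop (dir := dir) h)
      refine V_mono this (by omega)

lemma derivative_iterate_lineRes (w dir : ℝ × ℝ) (F : MvPolynomial (Fin 2) ℝ) (k : ℕ) :
    Polynomial.derivative^[k] (lineRes w dir F) = lineRes w dir ((Dop dir)^[k] F) := by
  induction k generalizing F with
  | zero => rfl
  | succ n ih =>
      rw [Function.iterate_succ_apply, Function.iterate_succ_apply,
        derivative_lineRes, ih]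
      rfl

lemma V_pev {m : ℕ} {F : MvPolynomial (Fin 2) ℝ} {w : ℝ × ℝ} (h : V m F w) (hm : 1 ≤ m) :
    pev F w = 0 := h 0 0 (by omega)

lemma lineRes_eq_zero {m : ℕ} (F : MvPolynomial (Fin 2) ℝ) (p q : ℝ × ℝ)
    (hdeg : F.totalDegree < 2 * m) (hVp : V m F p) (hVq : V m F q) :
    lineRes q (p.1 - q.1, p.2 - q.2) F = 0 := by
  set dir : ℝ × ℝ := (p.1 - q.1, p.2 - q.2) with hdir
  set f := lineRes q dir F with hf
  by_contra hne
  have hm1 : 1 ≤ m := by omega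
  have hq0 : ∀ k, k ≤ m - 1 → (Polynomial.derivative^[k] f).IsRoot 0 := by
    intro k hk
    rw [hf, derivative_iterate_lineRes]
    have h0 := eval_lineRes q dir ((Dop dir)^[k] F) 0
    have hvz : pev ((Dop dir)^[k] F) q = 0 :=
      V_pev (V_Dop_iter hVq) (by omega)
    rw [Polynomial.IsRoot, h0]
    rw [pev] at hvz
    convert hvz using 2
    norm_num
  have hq1 : ∀ k, k ≤ m - 1 → (Polynomial.derivative^[k] f).IsRoot 1 := by
    intro k hk
    rw [hf, derivative_iterate_lineRes]
    have h0 := eval_lineRes q dir ((Dop dir)^[k] F) 1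
    have hvz : pev ((Dop dir)^[k] F) p = 0 :=
      V_pev (V_Dop_iter hVp) (by omega)
    rw [Polynomial.IsRoot, h0]
    rw [pev] at hvz
    convert hvz using 2
    rw [hdir]; norm_num
  have hr0 : m - 1 < f.rootMultiplicity 0 :=
    Polynomial.lt_rootMultiplicity_of_isRoot_iterate_derivative_of_mem_nonZeroDivisors hne hq0
      (mem_nonZeroDivisors_of_ne_zero (by positivity))
  have hr1 : m - 1 < f.rootMultiplicity 1 :=
    Polynomial.lt_rootMultiplicity_of_isRoot_iterate_derivative_of_mem_nonZeroDivisors hne hq1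
      (mem_nonZeroDivisors_of_ne_zero (by positivity))
  have hd0 : (Polynomial.X - Polynomial.C (0:ℝ)) ^ m ∣ f :=
    (pow_dvd_pow _ (by omega)).trans (f.pow_rootMultiplicity_dvd 0)
  have hd1 : (Polynomial.X - Polynomial.C (1:ℝ)) ^ m ∣ f :=
    (pow_dvd_pow _ (by omega)).trans (f.pow_rootMultiplicity_dvd 1)
  have hcop : IsCoprime ((Polynomial.X - Polynomial.C (0:ℝ)) ^ m)
      ((Polynomial.X - Polynomial.C (1:ℝ)) ^ m) :=
    (Polynomial.isCoprime_X_sub_C_of_isUnit_sub (by norm_num)).pow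
  have hdvd := hcop.mul_dvd hd0 hd1
  have hle := Polynomial.natDegree_le_of_dvd hdvd hne
  rw [Polynomial.natDegree_mul (pow_ne_zero _ (Polynomial.X_sub_C_ne_zero 0))
    (pow_ne_zero _ (Polynomial.X_sub_C_ne_zero 1)),
    Polynomial.natDegree_pow, Polynomial.natDegree_pow, Polynomial.natDegree_X_sub_C,
    Polynomial.natDegree_X_sub_C] at hle
  have hnd := natDegree_lineRes_le q dir F
  rw [← hf] at hnd
  omega

lemma subst_dvd0 (s : MvPolynomial (Fin 2) ℝ) (G : MvPolynomial (Fin 2) ℝ) :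
    (X 0 - s) ∣ G - aeval (R := ℝ) ![s, X 1] G := by
  induction G using MvPolynomial.induction_on with
  | C a => simp
  | add f g hf hg =>
      have : f + g - aeval (R := ℝ) ![s, X 1] (f + g)
          = (f - aeval (R := ℝ) ![s, X 1] f) + (g - aeval (R := ℝ) ![s, X 1] g) := by
        rw [map_add]; ring
      rw [this]; exact dvd_add hf hg
  | mul_X f i hf =>
      rw [map_mul]
      fin_cases i <;> simp only [Fin.isValue, Fin.zero_eta, Fin.mk_one]
      · have : f * X 0 - aeval (R := ℝ) ![s, X 1] f * aeval (R := ℝ) ![s, X 1] (X 0)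
            = (f - aeval (R := ℝ) ![s, X 1] f) * X 0 + aeval (R := ℝ) ![s, X 1] f * (X 0 - s) := by
          simp only [aeval_X, Matrix.cons_val_zero]; ring
        rw [this]
        exact dvd_add (hf.mul_right _) (Dvd.intro_left _ rfl)
      · have : f * X 1 - aeval (R := ℝ) ![s, X 1] f * aeval (R := ℝ) ![s, X 1] (X 1)
            = (f - aeval (R := ℝ) ![s, X 1] f) * X 1 := by
          simp only [aeval_X, Matrix.cons_val_one, Matrix.head_cons, Matrix.cons_val_zero]; ring
        rw [this]
        exact hf.mul_right _

lemma subst_dvd1 (s : MvPolynomial (Fin 2) ℝ) (G : MvPolynomial (Fin 2) ℝ) :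
    (X 1 - s) ∣ G - aeval (R := ℝ) ![X 0, s] G := by
  induction G using MvPolynomial.induction_on with
  | C a => simp
  | add f g hf hg =>
      have : f + g - aeval (R := ℝ) ![X 0, s] (f + g)
          = (f - aeval (R := ℝ) ![X 0, s] f) + (g - aeval (R := ℝ) ![X 0, s] g) := by
        rw [map_add]; ring
      rw [this]; exact dvd_add hf hg
  | mul_X f i hf =>
      rw [map_mul]
      fin_cases i <;> simp only [Fin.isValue, Fin.zero_eta, Fin.mk_one]
      · have : f * X 0 - aeval (R := ℝ) ![X 0, s] f * aeval (R := ℝ) ![X 0, s] (X 0)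
            = (f - aeval (R := ℝ) ![X 0, s] f) * X 0 := by
          simp only [aeval_X, Matrix.cons_val_zero]; ring
        rw [this]
        exact hf.mul_right _
      · have : f * X 1 - aeval (R := ℝ) ![X 0, s] f * aeval (R := ℝ) ![X 0, s] (X 1)
            = (f - aeval (R := ℝ) ![X 0, s] f) * X 1 + aeval (R := ℝ) ![X 0, s] f * (X 1 - s) := by
          simp only [aeval_X, Matrix.cons_val_one, Matrix.head_cons, Matrix.cons_val_zero]; ring
        rw [this]
        exact dvd_add (hf.mul_right _) (Dvd.intro_left _ rfl)

lemma eval_aeval_pair (s t : MvPolynomial (Fin 2) ℝ) (G : MvPolynomial (Fin 2) ℝ)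
    (x : Fin 2 → ℝ) :
    eval x (aeval (R := ℝ) ![s, t] G) = eval ![eval x s, eval x t] G := by
  induction G using MvPolynomial.induction_on with
  | C a => simp
  | add f g hf hg => rw [map_add, map_add, hf, hg, map_add]
  | mul_X f i hf =>
      rw [map_mul, map_mul, hf, map_mul]
      congr 1
      fin_cases i <;> simp

lemma line_dvd (p q : ℝ × ℝ) (hpq : p ≠ q) (m : ℕ) (F : MvPolynomial (Fin 2) ℝ)
    (hdeg : F.totalDegree < 2 * m) (hVp : V m F p) (hVq : V m F q) :
    (C (p.2 - q.2) * (X 0 - C q.1) - C (p.1 - q.1) * (X 1 - C q.2)) ∣ F := by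
  set α : ℝ := p.1 - q.1 with hα
  set β : ℝ := p.2 - q.2 with hβ
  have hz := lineRes_eq_zero F p q hdeg hVp hVq
  have hline : ∀ t : ℝ, eval ![q.1 + t * α, q.2 + t * β] F = 0 := by
    intro t
    have h := eval_lineRes q (α, β) F t
    rw [hz] at h
    simpa using h.symm
  have hab : α ≠ 0 ∨ β ≠ 0 := by
    by_contra h
    push_neg at h
    apply hpq
    apply Prod.ext
    · have := h.1; rw [hα] at this; linarith [sub_eq_zero.mp this]
    · have := h.2; rw [hβ] at this; linarith [sub_eq_zero.mp this]
  rcases eq_or_ne β 0 with hβ0 | hβ0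
  · -- β = 0, so α ≠ 0 : solve for X 1
    have hα0 : α ≠ 0 := hab.resolve_right (not_not_intro hβ0)
    set s : MvPolynomial (Fin 2) ℝ := C q.2 + C (β / α) * (X 0 - C q.1) with hs
    have hσ : aeval (R := ℝ) ![X 0, s] F = 0 := by
      apply MvPolynomial.funext (q := 0)
      intro x
      rw [eval_aeval_pair, map_zero]
      have hv : (![eval x (X 0 : MvPolynomial (Fin 2) ℝ), eval x s] : Fin 2 → ℝ)
          = ![q.1 + ((x 0 - q.1) / α) * α, q.2 + ((x 0 - q.1) / α) * β] := by
        funext i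
        fin_cases i
        · simp only [Fin.zero_eta, Fin.isValue, Matrix.cons_val_zero, eval_X]
          field_simp
          ring
        · simp only [Matrix.cons_val_one, Matrix.head_cons, hs]
          simp only [map_add, map_mul, eval_C, map_sub, eval_X]
          field_simp
          ring
      rw [hv]
      exact hline _
    obtain ⟨G, hG⟩ := subst_dvd1 s F
    rw [hσ, sub_zero] at hG
    refine ⟨C (-α)⁻¹ * G, ?_⟩
    have key : (C α : MvPolynomial (Fin 2) ℝ) * C (β / α) = C β := by
      rw [← C_mul]
      congr 1
      field_simp
    have hL : C β * (X 0 - C q.1) - C α * (X 1 - C q.2)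
        = C (-α) * (X 1 - s) := by
      rw [hs, map_neg, ← key]
      ring
    rw [hL, hG]
    rw [show (C (-α) : MvPolynomial (Fin 2) ℝ) * (X 1 - s) * (C (-α)⁻¹ * G)
        = (C (-α) * C (-α)⁻¹) * ((X 1 - s) * G) from by ring,
      ← C_mul, mul_inv_cancel₀ (neg_ne_zero.mpr hα0), C_1, one_mul]
  · -- β ≠ 0 : solve for X 0
    set s : MvPolynomial (Fin 2) ℝ := C q.1 + C (α / β) * (X 1 - C q.2) with hs
    have hσ : aeval (R := ℝ) ![s, X 1] F = 0 := by
      apply MvPolynomial.funext (q := 0)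
      intro x
      rw [eval_aeval_pair, map_zero]
      have hv : (![eval x s, eval x (X 1 : MvPolynomial (Fin 2) ℝ)] : Fin 2 → ℝ)
          = ![q.1 + ((x 1 - q.2) / β) * α, q.2 + ((x 1 - q.2) / β) * β] := by
        funext i
        fin_cases i
        · simp only [Matrix.cons_val_zero, hs]
          simp only [map_add, map_mul, eval_C, map_sub, eval_X]
          field_simp
          ring
        · simp only [Fin.mk_one, Fin.isValue, Matrix.cons_val_one, Matrix.head_cons, eval_X, Matrix.cons_val_zero]
          field_simp
          ring
      rw [hv]
      exact hline _
    obtain ⟨G, hG⟩ := subst_dvd0 s F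
    rw [hσ, sub_zero] at hG
    refine ⟨C β⁻¹ * G, ?_⟩
    have key : (C β : MvPolynomial (Fin 2) ℝ) * C (α / β) = C α := by
      rw [← C_mul]
      congr 1
      field_simp
    have hL : C β * (X 0 - C q.1) - C α * (X 1 - C q.2)
        = C β * (X 0 - s) := by
      rw [hs, ← key]
      ring
    rw [hL, hG]
    rw [show (C β : MvPolynomial (Fin 2) ℝ) * (X 0 - s) * (C β⁻¹ * G)
        = (C β * C β⁻¹) * ((X 0 - s) * G) from by ring,
      ← C_mul, mul_inv_cancel₀ hβ0, C_1, one_mul]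

lemma pd_iter_mul_linear_aux (v : Fin 2) (L Q : MvPolynomial (Fin 2) ℝ) (c : ℝ)
    (hL : pderiv v L = C c) (n : ℕ) :
    (pd v)^[n + 1] (L * Q)
      = L * (pd v)^[n + 1] Q + C (c * (n + 1)) * (pd v)^[n] Q := by
  induction n with
  | zero =>
      simp only [Function.iterate_one, Function.iterate_zero, id_eq, Nat.cast_zero,
        zero_add, mul_one]
      rw [show (pd v) (L * Q) = pderiv v (L * Q) from rfl, pderiv_mul, hL,
        show pd v Q = pderiv v Q from rfl]
      ring
  | succ n ih =>
      rw [Function.iterate_succ_apply' (pd v) (n + 1), ih]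
      rw [show ∀ A : MvPolynomial (Fin 2) ℝ, pd v A = pderiv v A from fun _ => rfl]
      rw [map_add, pderiv_mul, hL, pderiv_C_mul]
      rw [show pderiv v ((pd v)^[n + 1] Q) = (pd v)^[n + 1 + 1] Q from
        (Function.iterate_succ_apply' (pd v) (n + 1) Q).symm]
      rw [show pderiv v ((pd v)^[n] Q) = (pd v)^[n + 1] Q from
        (Function.iterate_succ_apply' (pd v) n Q).symm]
      have hC : (C (c * ((↑(n+1):ℝ) + 1)) : MvPolynomial (Fin 2) ℝ)
          = C c + C (c * ((n:ℝ) + 1)) := by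
        rw [← C_add]
        congr 1
        push_cast
        ring
      rw [hC]
      ring

lemma pd_iter_mul_linear (v : Fin 2) (L Q : MvPolynomial (Fin 2) ℝ) (c : ℝ)
    (hL : pderiv v L = C c) (k : ℕ) :
    (pd v)^[k] (L * Q)
      = L * (pd v)^[k] Q + C (c * k) * (pd v)^[k - 1] Q := by
  cases k with
  | zero => simp
  | succ n =>
      have := pd_iter_mul_linear_aux v L Q c hL n
      rw [show n + 1 - 1 = n from rfl]
      push_cast
      exact this

lemma pd_double_mul_linear (L Q : MvPolynomial (Fin 2) ℝ) (b0 b1 : ℝ)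
    (h0 : pderiv 0 L = C b0) (h1 : pderiv 1 L = C b1) (i j : ℕ) :
    (pd 0)^[i] ((pd 1)^[j] (L * Q))
      = L * (pd 0)^[i] ((pd 1)^[j] Q)
        + C (b0 * i) * (pd 0)^[i - 1] ((pd 1)^[j] Q)
        + C (b1 * j) * (pd 0)^[i] ((pd 1)^[j - 1] Q) := by
  rw [pd_iter_mul_linear 1 L Q b1 h1 j, pd_add, pd_C_mul,
    pd_iter_mul_linear 0 L ((pd 1)^[j] Q) b0 h0 i]

lemma V_quotient (Q : MvPolynomial (Fin 2) ℝ) (α β : ℝ) (e f : ℝ) (w : ℝ × ℝ)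
    (hab : α ≠ 0 ∨ β ≠ 0)
    (hw : pev (C β * (X 0 - C e) - C α * (X 1 - C f)) w = 0)
    (m : ℕ) (h : V m ((C β * (X 0 - C e) - C α * (X 1 - C f)) * Q) w) :
    V (m - 1) Q w := by
  set L : MvPolynomial (Fin 2) ℝ := C β * (X 0 - C e) - C α * (X 1 - C f) with hLdef
  have h0 : pderiv 0 L = C β := by
    rw [hLdef]
    simp [pderiv_mul, pderiv_X_of_ne (show (1:Fin 2) ≠ 0 by decide),
      pderiv_X_of_ne (show (0:Fin 2) ≠ 1 by decide)]
  have h1 : pderiv 1 L = C (-α) := by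
    rw [hLdef]
    simp [pderiv_mul, pderiv_X_of_ne (show (1:Fin 2) ≠ 0 by decide),
      pderiv_X_of_ne (show (0:Fin 2) ≠ 1 by decide)]
  set A : ℕ → ℕ → ℝ := fun i j => pev ((pd 0)^[i] ((pd 1)^[j] Q)) w with hA
  have hrel : ∀ i j : ℕ, i + j < m →
      β * i * A (i - 1) j + (-α) * j * A i (j - 1) = 0 := by
    intro i j hij
    have hD := pd_double_mul_linear L Q β (-α) h0 h1 i j
    have hVij := h i j hij
    rw [hD] at hVij
    simp only [pev] at hw
    simp only [pev, map_add, map_mul, eval_C] at hVij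
    rw [hw, zero_mul, zero_add] at hVij
    simp only [hA, pev]
    linarith [hVij]
  rcases eq_or_ne β 0 with hβ0 | hβ0
  · -- β = 0, α ≠ 0
    have hα0 : α ≠ 0 := hab.resolve_right (not_not_intro hβ0)
    intro i j hij
    have := hrel i (j + 1) (by omega)
    rw [hβ0] at this
    simp only [zero_mul, zero_add] at this
    have hj : ((j : ℝ) + 1) ≠ 0 := by positivity
    have : A i j = 0 := by
      have h2 : (-α) * (↑(j + 1) : ℝ) ≠ 0 := by
        push_cast
        exact mul_ne_zero (neg_ne_zero.mpr hα0) hj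
      have h3 := this
      rw [show (j + 1) - 1 = j from rfl] at h3
      exact (mul_eq_zero.mp h3).resolve_left h2
    exact this
  · -- β ≠ 0
    intro i j hij
    induction j generalizing i with
    | zero =>
        have := hrel (i + 1) 0 (by omega)
        simp only [Nat.cast_zero, mul_zero, zero_mul, add_zero] at this
        have h2 : β * (↑(i + 1) : ℝ) ≠ 0 := by
          push_cast
          exact mul_ne_zero hβ0 (by positivity)
        have h3 := this
        rw [show (i + 1) - 1 = i from rfl] at h3
        exact (mul_eq_zero.mp h3).resolve_left h2
    | succ n ih =>
        have hprev : A (i + 1) n = 0 := ih (i + 1) (by omega)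
        have := hrel (i + 1) (n + 1) (by omega)
        rw [show (i + 1) - 1 = i from rfl, show (n + 1) - 1 = n from rfl, hprev] at this
        simp only [mul_zero] at this
        have h2 : β * (↑(i + 1) : ℝ) ≠ 0 := by
          push_cast
          exact mul_ne_zero hβ0 (by positivity)
        have h3 : β * (↑(i + 1) : ℝ) * A i (n + 1) = 0 := by linarith
        exact (mul_eq_zero.mp h3).resolve_left h2

/-- Embedding witnessing total degree as a univariate degree. -/
noncomputable def Phi : MvPolynomial (Fin 2) ℝ →ₐ[ℝ] Polynomial (MvPolynomial (Fin 2) ℝ) :=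
  aeval (fun i : Fin 2 => Polynomial.C (X i) * Polynomial.X)

lemma Phi_monomial (s : Fin 2 →₀ ℕ) (a : ℝ) :
    Phi (monomial s a)
      = Polynomial.C (monomial s a) * Polynomial.X ^ (s.sum fun _ e => e) := by
  rw [monomial_eq, Phi, map_mul]
  rw [show (aeval (R := ℝ) fun i : Fin 2 => Polynomial.C (X i) * Polynomial.X) (C a)
      = Polynomial.C (C a) from by simp [algebraMap_eq]]
  rw [map_finsuppProd]
  simp only [map_pow, aeval_X]
  have : (s.prod fun i e => (Polynomial.C (X i : MvPolynomial (Fin 2) ℝ) * Polynomial.X) ^ e)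
      = Polynomial.C (s.prod fun i e => (X i : MvPolynomial (Fin 2) ℝ) ^ e)
        * Polynomial.X ^ (s.sum fun _ e => e) := by
    rw [Finsupp.prod, Finsupp.prod, Finsupp.sum]
    calc ∏ i ∈ s.support, (Polynomial.C (X i : MvPolynomial (Fin 2) ℝ) * Polynomial.X) ^ s i
        = ∏ i ∈ s.support,
            (Polynomial.C ((X i : MvPolynomial (Fin 2) ℝ) ^ s i) * Polynomial.X ^ s i) := by
          refine Finset.prod_congr rfl fun i _ => ?_
          rw [mul_pow, map_pow]
      _ = (∏ i ∈ s.support, Polynomial.C ((X i : MvPolynomial (Fin 2) ℝ) ^ s i))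
            * ∏ i ∈ s.support, Polynomial.X ^ s i := Finset.prod_mul_distrib
      _ = Polynomial.C (∏ i ∈ s.support, (X i : MvPolynomial (Fin 2) ℝ) ^ s i)
            * Polynomial.X ^ ∑ i ∈ s.support, s i := by
          rw [map_prod, Finset.prod_pow_eq_pow_sum]
  rw [this, ← mul_assoc, ← Polynomial.C_mul]

lemma coeff_Phi (F : MvPolynomial (Fin 2) ℝ) (n : ℕ) :
    (Phi F).coeff n = homogeneousComponent n F := by
  induction F using MvPolynomial.induction_on' with
  | monomial s a =>
      rw [Phi_monomial, Polynomial.coeff_C_mul, Polynomial.coeff_X_pow]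
      have hhom : (monomial s a) ∈ homogeneousSubmodule (Fin 2) ℝ (s.sum fun _ e => e) := by
        rw [mem_homogeneousSubmodule]
        exact isHomogeneous_monomial a rfl
      rw [homogeneousComponent_of_mem hhom]
      by_cases h : n = s.sum fun _ e => e
      · rw [if_pos h, if_pos h, mul_one]
      · rw [if_neg h, if_neg h, mul_zero]
  | add f g hf hg => rw [map_add, Polynomial.coeff_add, hf, hg, map_add]

lemma homogeneousComponent_totalDegree_ne_zero {F : MvPolynomial (Fin 2) ℝ} (hF : F ≠ 0) :
    homogeneousComponent F.totalDegree F ≠ 0 := by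
  have hsupp : F.support.Nonempty := support_nonempty.mpr hF
  obtain ⟨m, hm, hdeg⟩ := Finset.exists_mem_eq_sup F.support hsupp
    (fun m => m.sum fun _ e => e)
  intro hzero
  have := coeff_homogeneousComponent (n := F.totalDegree) (φ := F) m
  rw [hzero] at this
  simp only [coeff_zero] at this
  rw [if_pos] at this
  · exact mem_support_iff.mp hm this.symm
  · show m.degree = F.totalDegree
    rw [totalDegree, hdeg]
    rfl

lemma natDegree_Phi {F : MvPolynomial (Fin 2) ℝ} (hF : F ≠ 0) :
    (Phi F).natDegree = F.totalDegree := by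
  apply le_antisymm
  · rw [Polynomial.natDegree_le_iff_coeff_eq_zero]
    intro N hN
    rw [coeff_Phi]
    exact homogeneousComponent_eq_zero _ _ hN
  · apply Polynomial.le_natDegree_of_ne_zero
    rw [coeff_Phi]
    exact homogeneousComponent_totalDegree_ne_zero hF

lemma Phi_ne_zero {F : MvPolynomial (Fin 2) ℝ} (hF : F ≠ 0) : Phi F ≠ 0 := by
  intro h
  apply homogeneousComponent_totalDegree_ne_zero hF
  rw [← coeff_Phi, h, Polynomial.coeff_zero]

lemma totalDegree_mul_eq {F G : MvPolynomial (Fin 2) ℝ} (hF : F ≠ 0) (hG : G ≠ 0) :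
    (F * G).totalDegree = F.totalDegree + G.totalDegree := by
  have h := Polynomial.natDegree_mul (Phi_ne_zero hF) (Phi_ne_zero hG)
  rw [← map_mul] at h
  rw [← natDegree_Phi (mul_ne_zero hF hG), h, natDegree_Phi hF, natDegree_Phi hG]

lemma totalDegree_line (α β e f : ℝ) (hab : α ≠ 0 ∨ β ≠ 0) :
    (C β * (X 0 - C e) - C α * (X 1 - C f) : MvPolynomial (Fin 2) ℝ).totalDegree = 1 := by
  set L : MvPolynomial (Fin 2) ℝ := C β * (X 0 - C e) - C α * (X 1 - C f) with hLdef
  have hu : L.totalDegree ≤ 1 := by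
    refine (totalDegree_sub _ _).trans (max_le ?_ ?_) <;>
      refine (totalDegree_mul _ _).trans ?_ <;>
        · rw [totalDegree_C, zero_add]
          refine (totalDegree_sub _ _).trans ?_
          simp [totalDegree_X, totalDegree_C]
  have hpos : 0 < β ^ 2 + α ^ 2 := by
    rcases hab with h | h
    · have h2 : (0:ℝ) < α ^ 2 :=
        lt_of_le_of_ne (sq_nonneg α) (Ne.symm (pow_ne_zero 2 h))
      nlinarith [sq_nonneg β]
    · have h2 : (0:ℝ) < β ^ 2 :=
        lt_of_le_of_ne (sq_nonneg β) (Ne.symm (pow_ne_zero 2 h))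
      nlinarith [sq_nonneg α]
  have hl : 1 ≤ L.totalDegree := by
    by_contra hcon
    push_neg at hcon
    have h0 : L.totalDegree = 0 := by omega
    rw [totalDegree_eq_zero_iff] at h0
    have hC : L = C (coeff 0 L) := by
      ext m
      rcases eq_or_ne m 0 with rfl | hm
      · rw [coeff_C, if_pos rfl]
      · rw [coeff_C, if_neg (Ne.symm hm)]
        by_contra hc
        have hmem : m ∈ L.support := mem_support_iff.mpr hc
        apply hm
        ext x
        exact h0 m hmem x
    have he1 : eval ![e, f] L = coeff 0 L := by rw [hC]; simp
    have he2 : eval ![e + β, f - α] L = coeff 0 L := by rw [hC]; simp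
    have hv1 : eval ![e, f] L = 0 := by
      rw [hLdef]
      simp
    have hv2 : eval ![e + β, f - α] L = β ^ 2 + α ^ 2 := by
      rw [hLdef]
      simp
      ring
    rw [hv1] at he1
    rw [hv2] at he2
    rw [← he1] at he2
    linarith
  omega

lemma totalDegree_pow_mul (L Q : MvPolynomial (Fin 2) ℝ) (hL0 : L ≠ 0) (hQ0 : Q ≠ 0)
    (hL1 : L.totalDegree = 1) (k : ℕ) :
    (L ^ k * Q).totalDegree = k + Q.totalDegree := by
  induction k with
  | zero => rw [pow_zero, one_mul, zero_add]
  | succ n ih =>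
      rw [pow_succ, show L ^ n * L * Q = L * (L ^ n * Q) from by ring,
        totalDegree_mul_eq hL0 (mul_ne_zero (pow_ne_zero n hL0) hQ0), ih, hL1]
      omega


/-- a degree `D ≥ 5` curve with two distinct singular points of
multiplicity at least `D − 2` contains the line `L` through the two points with
multiplicity `D − 4`: `P = L^{D−4}·Q` with `Q` of total degree at most `4`. -/
theorem high_degree_curve_factorises
    (D : ℕ) (hD : 5 ≤ D)
    (P : MvPolynomial (Fin 2) ℝ) (hdeg : P.totalDegree = D)
    (p q : ℝ × ℝ) (hpq : p ≠ q)
    (hp : ∀ i j : ℕ, i + j < D - 2 → pev ((pd 0)^[i] ((pd 1)^[j] P)) p = 0)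
    (hq : ∀ i j : ℕ, i + j < D - 2 → pev ((pd 0)^[i] ((pd 1)^[j] P)) q = 0) :
    ∃ Q : MvPolynomial (Fin 2) ℝ,
      P = (C (p.2 - q.2) * (X 0 - C q.1) - C (p.1 - q.1) * (X 1 - C q.2)) ^ (D - 4) * Q ∧
        Q.totalDegree ≤ 4 := by
  set α : ℝ := p.1 - q.1 with hα
  set β : ℝ := p.2 - q.2 with hβ
  set L : MvPolynomial (Fin 2) ℝ := C β * (X 0 - C q.1) - C α * (X 1 - C q.2) with hLdef
  have hab : α ≠ 0 ∨ β ≠ 0 := by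
    by_contra h
    push_neg at h
    apply hpq
    apply Prod.ext
    · have := h.1; rw [hα] at this; linarith [sub_eq_zero.mp this]
    · have := h.2; rw [hβ] at this; linarith [sub_eq_zero.mp this]
  have hLdeg : L.totalDegree = 1 := totalDegree_line α β q.1 q.2 hab
  have hL0 : L ≠ 0 := by
    intro h
    rw [h, totalDegree_zero] at hLdeg
    omega
  have hP0 : P ≠ 0 := by
    intro h
    rw [h, totalDegree_zero] at hdeg
    omega
  have hLp : pev L p = 0 := by
    rw [hLdef, pev]
    simp
    ring
  have hLq : pev L q = 0 := by
    rw [hLdef, pev]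
    simp
  have key : ∀ k : ℕ, k ≤ D - 4 →
      ∃ Q : MvPolynomial (Fin 2) ℝ,
        P = L ^ k * Q ∧ V (D - 2 - k) Q p ∧ V (D - 2 - k) Q q := by
    intro k
    induction k with
    | zero =>
        intro _
        refine ⟨P, by rw [pow_zero, one_mul], ?_, ?_⟩
        · intro i j hij; exact hp i j (by omega)
        · intro i j hij; exact hq i j (by omega)
    | succ k ih =>
        intro hk
        obtain ⟨Q, hPQ, hVp, hVq⟩ := ih (by omega)
        have hQ0 : Q ≠ 0 := by
          intro h
          rw [h, mul_zero] at hPQ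
          exact hP0 hPQ
        have hdegQ : Q.totalDegree = D - k := by
          have := totalDegree_pow_mul L Q hL0 hQ0 hLdeg k
          rw [← hPQ, hdeg] at this
          omega
        have hdvd : L ∣ Q := by
          rw [hLdef, hα, hβ]
          apply line_dvd p q hpq (D - 2 - k) Q
          · rw [hdegQ]; omega
          · exact hVp
          · exact hVq
        obtain ⟨Q', hQ'⟩ := hdvd
        refine ⟨Q', ?_, ?_, ?_⟩
        · rw [hPQ, hQ', pow_succ]; ring
        · have := V_quotient Q' α β q.1 q.2 p hab (by rw [← hLdef]; exact hLp)
            (D - 2 - k) (by rw [← hLdef, ← hQ']; exact hVp)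
          intro i j hij
          exact this i j (by omega)
        · have := V_quotient Q' α β q.1 q.2 q hab (by rw [← hLdef]; exact hLq)
            (D - 2 - k) (by rw [← hLdef, ← hQ']; exact hVq)
          intro i j hij
          exact this i j (by omega)
  obtain ⟨Q, hPQ, -, -⟩ := key (D - 4) le_rfl
  refine ⟨Q, ?_, ?_⟩
  · exact hPQ
  · have hQ0 : Q ≠ 0 := by
      intro h
      rw [h, mul_zero] at hPQ
      exact hP0 hPQ
    have := totalDegree_pow_mul L Q hL0 hQ0 hLdeg (D - 4)
    rw [← hPQ, hdeg] at this
    omega
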